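/- A domain D in the d-regular tree T_d with |D| ≥ 2 is isoperimetrically optimal if and only if τ(D) ≤ d − 2. -/

import Mathlib

/-- Inner vertex boundary of a finite vertex set `D`: vertices of `D` having a neighbor
outside `D`. -/
noncomputable def innerBoundary {V : Type*} (G : SimpleGraph V) (D : Finset V) : Finset V := by
  classical exact D.filter (fun x => ∃ y, y ∉ D ∧ G.Adj x y)

/-- Outer vertex boundary of `D`: vertices outside `D` having a neighbor in `D`. -/
def outerBoundary {V : Type*} (G : SimpleGraph V) (D : Finset V) : Set V :=
  {y | y ∉ D ∧ ∃ x ∈ D, G.Adj x y}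

/-- Number of neighbors of `x` lying in `D`. -/
noncomputable def degIn {V : Type*} (G : SimpleGraph V) (D : Finset V) (x : V) : ℕ := by
  classical exact (D.filter (fun y => G.Adj x y)).card

/-- A domain: a finite nonempty vertex set whose induced subgraph is connected. -/
def IsGraphDomain {V : Type*} (G : SimpleGraph V) (D : Finset V) : Prop :=
  D.Nonempty ∧ (G.induce (↑D : Set V)).Connected

/-- `G` is a `d`-regular tree: connected, acyclic, and every vertex has degree `d`. -/
def IsRegularTree {V : Type*} (G : SimpleGraph V) (d : ℕ) : Prop :=
  G.Connected ∧ G.IsAcyclic ∧ ∀ v : V, (G.neighborSet v).ncard = d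

/-- Boundary branching excess `τ(D) = Σ_{x ∈ ∂D} (deg_D(x) − 1)`. -/
noncomputable def tauD {V : Type*} (G : SimpleGraph V) (D : Finset V) : ℕ :=
  ∑ x ∈ innerBoundary G D, (degIn G D x - 1)

/-- Residual boundary `R(D) = {x ∈ ∂D : deg_D(x) ≥ 2}`. -/
noncomputable def residualBoundary {V : Type*} (G : SimpleGraph V) (D : Finset V) : Finset V := by
  classical exact (innerBoundary G D).filter (fun x => 2 ≤ degIn G D x)

/-- `D` is isoperimetrically optimal: its inner boundary is smallest among all domains
of the same cardinality. -/
def IsOptimal {V : Type*} (G : SimpleGraph V) (D : Finset V) : Prop :=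
  ∀ D' : Finset V, IsGraphDomain G D' → D'.card = D.card →
    (innerBoundary G D).card ≤ (innerBoundary G D').card

section Aux
open Finset SimpleGraph
open scoped Classical
variable {V : Type*} {T : SimpleGraph V} {d : ℕ} {D : Finset V}

lemma mem_innerBoundary {x : V} :
    x ∈ innerBoundary T D ↔ x ∈ D ∧ ∃ y, y ∉ D ∧ T.Adj x y := by
  simp [innerBoundary]

lemma degIn_eq {x : V} : degIn T D x = (D.filter (fun y => T.Adj x y)).card := by
  simp [degIn]

lemma innerBoundary_subset : innerBoundary T D ⊆ D := by
  intro x hx; exact (mem_innerBoundary.1 hx).1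

lemma neighborSet_finite (hT : IsRegularTree T d) (hd : 2 ≤ d) (v : V) :
    (T.neighborSet v).Finite := by
  by_contra h
  have h2 : (T.neighborSet v).ncard = 0 := Set.Infinite.ncard h
  have := hT.2.2 v
  omega

lemma degIn_le (hT : IsRegularTree T d) (hd : 2 ≤ d) (x : V) : degIn T D x ≤ d := by
  rw [degIn_eq]
  have hsub : ((D.filter (fun y => T.Adj x y)) : Set V) ⊆ T.neighborSet x := by
    intro y hy
    simp only [coe_filter, Set.mem_setOf_eq] at hy
    exact hy.2
  have := Set.ncard_le_ncard hsub (neighborSet_finite hT hd x)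
  rwa [Set.ncard_coe_finset, hT.2.2 x] at this

lemma mem_innerBoundary_iff_degIn_lt (hT : IsRegularTree T d) (hd : 2 ≤ d) {x : V}
    (hx : x ∈ D) : x ∈ innerBoundary T D ↔ degIn T D x < d := by
  rw [mem_innerBoundary]
  constructor
  · rintro ⟨-, y, hy, ha⟩
    have hsub : ((D.filter (fun z => T.Adj x z)) : Set V) ⊆ T.neighborSet x \ {y} := by
      intro z hz
      simp only [coe_filter, Set.mem_setOf_eq] at hz
      refine ⟨hz.2, ?_⟩
      simp only [Set.mem_singleton_iff]
      rintro rfl; exact hy hz.1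
    have h1 := Set.ncard_le_ncard hsub (neighborSet_finite hT hd x).diff
    have h2 := Set.ncard_diff_singleton_of_mem (s := T.neighborSet x) ha
    rw [hT.2.2 x] at h2
    rw [degIn_eq]
    rw [Set.ncard_coe_finset, h2] at h1
    omega
  · intro h
    refine ⟨hx, ?_⟩
    by_contra hc
    push_neg at hc
    have hsub : T.neighborSet x ⊆ ((D.filter (fun z => T.Adj x z)) : Set V) := by
      intro z hz
      simp only [coe_filter, Set.mem_setOf_eq]
      by_cases hzD : z ∈ D
      · exact ⟨hzD, hz⟩
      · exact absurd hz (hc z hzD)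
    have := Set.ncard_le_ncard hsub (Set.Finite.ofFinset _ (fun a => Iff.rfl))
    rw [Set.ncard_coe_finset, ← degIn_eq] at this
    rw [hT.2.2 x] at this
    omega
end Aux
section Aux2
open Finset SimpleGraph
open scoped Classical
variable {V : Type*} {T : SimpleGraph V} {d : ℕ} {D : Finset V}

/-- From connectedness of the induced graph: a path in `T` between members of `D`
whose support stays in `D`. -/
lemma exists_path_in (hconn : (T.induce (↑D : Set V)).Connected) {x y : V}
    (hx : x ∈ D) (hy : y ∈ D) :
    ∃ p : T.Walk x y, p.IsPath ∧ ∀ v ∈ p.support, v ∈ D := by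
  obtain ⟨w⟩ := hconn.preconnected ⟨x, hx⟩ ⟨y, hy⟩
  let q : T.Walk x y := w.map (SimpleGraph.Embedding.induce (↑D : Set V)).toHom
  refine ⟨q.toPath.1, q.toPath.2, fun v hv => ?_⟩
  have hv2 := SimpleGraph.Walk.support_toPath_subset q hv
  simp only [q, SimpleGraph.Walk.support_map] at hv2
  obtain ⟨u, hu, rfl⟩ := List.mem_map.1 (show v ∈ w.support.map (SimpleGraph.Embedding.induce (↑D : Set V)).toHom from
    Eq.mp (congrArg (v ∈ ·) (SimpleGraph.Walk.support_map (SimpleGraph.Embedding.induce (↑D : Set V)).toHom w)) hv2)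
  exact u.2

lemma degIn_pos (hD : IsGraphDomain T D) (hcard : 2 ≤ D.card) {x : V} (hx : x ∈ D) :
    1 ≤ degIn T D x := by
  obtain ⟨y, hy, hyx⟩ := Finset.exists_mem_ne (s := D) (by omega) x
  obtain ⟨p, hp, hsupp⟩ := exists_path_in hD.2 hx hy
  cases p with
  | nil => exact absurd rfl hyx
  | cons h q =>
    rw [degIn_eq]
    refine Finset.card_pos.2 ⟨_, Finset.mem_filter.2 ⟨hsupp _ ?_, h⟩⟩
    simp [SimpleGraph.Walk.support_cons]

/-- In a tree, a vertex outside a connected set has at most one neighbor inside it. -/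
lemma unique_attach (hT : IsRegularTree T d) (hconn : (T.induce (↑D : Set V)).Connected)
    {y x x' : V} (hy : y ∉ D) (hx : x ∈ D) (hx' : x' ∈ D)
    (a1 : T.Adj x y) (a2 : T.Adj x' y) : x = x' := by
  by_contra hne
  obtain ⟨p, hp, hsupp⟩ := exists_path_in hconn hx hx'
  have hxy : x ≠ y := fun h => hy (h ▸ hx)
  have hyx' : y ≠ x' := fun h => hy (h.symm ▸ hx')
  have hq : (SimpleGraph.Walk.cons a1 (SimpleGraph.Walk.cons a2.symm SimpleGraph.Walk.nil)).IsPath := by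
    simp [SimpleGraph.Walk.isPath_def, hxy, hne, hyx']
  have := hT.2.1.path_unique ⟨p, hp⟩ ⟨_, hq⟩
  have hys : y ∈ p.support := by
    rw [show p = SimpleGraph.Walk.cons a1 (SimpleGraph.Walk.cons a2.symm SimpleGraph.Walk.nil) from congrArg Subtype.val this]
    simp
  exact hy (hsupp y hys)

lemma walk_closed {S : Finset V} (hS : ∀ x ∈ S, ∀ y, T.Adj x y → y ∈ S) {u v : V}
    (w : T.Walk u v) (hu : u ∈ S) : v ∈ S := by
  induction w with
  | nil => exact hu
  | cons h p ih => exact ih (hS _ hu _ h)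

lemma boundary_nonempty (hT : IsRegularTree T d) (hd : 2 ≤ d) (hD : IsGraphDomain T D) :
    (innerBoundary T D).Nonempty := by
  rw [Finset.nonempty_iff_ne_empty]
  intro hemp
  have hclosed : ∀ x ∈ D, ∀ y, T.Adj x y → y ∈ D := by
    intro x hx y hxy
    by_contra hyD
    have : x ∈ innerBoundary T D := mem_innerBoundary.2 ⟨hx, y, hyD, hxy⟩
    simp [hemp] at this
  obtain ⟨x0, hx0⟩ := hD.1
  have hall : ∀ v : V, v ∈ D := by
    intro v
    obtain ⟨w⟩ := hT.1.preconnected x0 v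
    exact walk_closed hclosed w hx0
  haveI : Fintype V := ⟨D, hall⟩
  haveI : DecidableEq V := Classical.decEq V
  haveI : DecidableRel T.Adj := fun a b => Classical.dec _
  have htree : T.IsTree := ⟨hT.1, hT.2.1⟩
  have hedge := htree.card_edgeFinset
  have hdeg : ∀ v : V, T.degree v = d := by
    intro v
    have h := hT.2.2 v
    rwa [Set.ncard_eq_toFinset_card', Set.toFinset_card,
      SimpleGraph.card_neighborSet_eq_degree] at h
  have hsum := SimpleGraph.sum_degrees_eq_twice_card_edges T
  simp only [hdeg, Finset.sum_const, smul_eq_mul, Finset.card_univ] at hsum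
  have hN : 1 ≤ Fintype.card V := Fintype.card_pos_iff.2 ⟨x0⟩
  have hmul : Fintype.card V * 2 ≤ Fintype.card V * d := Nat.mul_le_mul_left _ hd
  omega
end Aux2
section Aux3
open Finset SimpleGraph
open scoped Classical
variable {V : Type*} {T : SimpleGraph V} {d : ℕ} {D : Finset V}

lemma induce_acyclic (hT : IsRegularTree T d) (s : Set V) : (T.induce s).IsAcyclic := by
  intro v c hc
  let f : T.induce s ↪g T := SimpleGraph.Embedding.induce s
  have hinj : Function.Injective (f.toHom : ↥s → V) := f.injective
  exact hT.2.1 _ (hc.map hinj)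

lemma sum_degIn (hT : IsRegularTree T d) (hD : IsGraphDomain T D) :
    ∑ x ∈ D, degIn T D x = 2 * (D.card - 1) := by
  haveI : Fintype ↥(↑D : Set V) := FinsetCoe.fintype D
  set G' : SimpleGraph ↥(↑D : Set V) := T.induce (↑D : Set V) with hG'
  haveI : DecidableRel G'.Adj := fun a b => Classical.dec _
  have htree : G'.IsTree := ⟨hD.2, induce_acyclic hT _⟩
  have hedge := htree.card_edgeFinset
  have hcardV : Fintype.card ↥(↑D : Set V) = D.card := by
    simpa using Set.ncard_coe_Finset D
  have hsum := SimpleGraph.sum_degrees_eq_twice_card_edges G'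
  have hdeg : ∀ v : ↥(↑D : Set V), G'.degree v = degIn T D v.1 := by
    intro v
    rw [degIn_eq, ← SimpleGraph.card_neighborFinset_eq_degree]
    refine Finset.card_bij (fun a _ => a.1) ?_ ?_ ?_
    · intro a ha
      rw [SimpleGraph.mem_neighborFinset] at ha
      exact Finset.mem_filter.2 ⟨Finset.mem_coe.1 a.2, ha⟩
    · intro a _ b _ h
      exact Subtype.ext h
    · intro y hy
      rw [Finset.mem_filter] at hy
      exact ⟨⟨y, hy.1⟩, by rw [SimpleGraph.mem_neighborFinset]; exact hy.2, rfl⟩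
  have hsum2 : ∑ v : ↥(↑D : Set V), G'.degree v = ∑ x ∈ D, degIn T D x := by
    rw [Finset.sum_congr rfl (fun v _ => hdeg v)]
    exact Finset.sum_bij (fun (v : ↥(↑D : Set V)) _ => v.1) (fun a _ => a.2)
      (fun a _ b _ h => Subtype.ext h) (fun y hy => ⟨⟨y, hy⟩, Finset.mem_univ _, rfl⟩)
      (fun a _ => rfl)
  rw [hsum2] at hsum
  rw [hcardV] at hedge
  have hpos : 1 ≤ D.card := Finset.card_pos.2 hD.1
  omega
end Aux3
section Aux4
open Finset SimpleGraph
open scoped Classical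
variable {V : Type*} {T : SimpleGraph V} {d : ℕ} {D : Finset V}

/-- The fundamental identity: `(d-1)·|∂D| = τ(D) + (d-2)·|D| + 2`. -/
lemma boundary_identity (hT : IsRegularTree T d) (hd : 2 ≤ d) (hD : IsGraphDomain T D)
    (hcard : 2 ≤ D.card) :
    ((d : ℤ) - 1) * (innerBoundary T D).card
      = (tauD T D : ℤ) + ((d : ℤ) - 2) * D.card + 2 := by
  set B := innerBoundary T D with hB
  have hBD : B ⊆ D := innerBoundary_subset
  have hint : ∀ x ∈ D \ B, degIn T D x = d := by
    intro x hx
    rw [Finset.mem_sdiff] at hx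
    have h1 := degIn_le (D := D) hT hd x
    have h2 : ¬ degIn T D x < d := fun h =>
      hx.2 ((mem_innerBoundary_iff_degIn_lt hT hd hx.1).2 h)
    omega
  have hsplit : ∑ x ∈ D \ B, degIn T D x + ∑ x ∈ B, degIn T D x = ∑ x ∈ D, degIn T D x :=
    Finset.sum_sdiff hBD
  have hIcard : (D \ B).card = D.card - B.card := Finset.card_sdiff_of_subset hBD
  have hsum := sum_degIn hT hD
  have hterm : ∀ x ∈ B, ((degIn T D x - 1 : ℕ) : ℤ) = (degIn T D x : ℤ) - 1 := by
    intro x hx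
    have h1 : 1 ≤ degIn T D x := degIn_pos hD hcard (hBD hx)
    omega
  have htau : (tauD T D : ℤ) = (∑ x ∈ B, (degIn T D x : ℤ)) - B.card := by
    rw [tauD, ← hB, Nat.cast_sum, Finset.sum_congr rfl hterm, Finset.sum_sub_distrib,
      Finset.sum_const, nsmul_eq_mul, mul_one]
  have hBle : B.card ≤ D.card := Finset.card_le_card hBD
  have e1 : (∑ x ∈ B, (degIn T D x : ℤ))
      = 2 * ((D.card : ℤ) - 1) - (d : ℤ) * ((D.card : ℤ) - B.card) := by
    have := congrArg (Nat.cast : ℕ → ℤ) hsplit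
    push_cast at this
    rw [Finset.sum_congr rfl (fun x hx => congrArg (Nat.cast : ℕ → ℤ) (hint x hx)),
      Finset.sum_const, nsmul_eq_mul] at this
    have hc := congrArg (Nat.cast : ℕ → ℤ) hsum
    push_cast [Nat.cast_sub (show 1 ≤ D.card by omega)] at hc
    have hc2 : ((D \ B).card : ℤ) = (D.card : ℤ) - B.card := by
      rw [hIcard]; push_cast [Nat.cast_sub hBle]; ring
    rw [hc2] at this
    linarith [this, hc]
  rw [htau, e1]
  ring
end Aux4
section Aux5
open Finset SimpleGraph
open scoped Classical
variable {V : Type*} {T : SimpleGraph V} {d : ℕ} {D : Finset V}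

lemma domain_insert (hD : IsGraphDomain T D) {x y : V} (hx : x ∈ D) (hy : y ∉ D)
    (ha : T.Adj x y) : IsGraphDomain T (insert y D) := by
  refine ⟨⟨y, Finset.mem_insert_self y D⟩, ?_⟩
  have hle : (↑D : Set V) ≤ (↑(insert y D) : Set V) := by
    intro v hv; simp only [Finset.coe_insert, Set.mem_insert_iff]; exact Or.inr hv
  have hyI : y ∈ (↑(insert y D) : Set V) := by simp
  have hxI : x ∈ (↑(insert y D) : Set V) := by simp [hx]
  rw [SimpleGraph.connected_iff]
  refine ⟨?_, ⟨⟨y, hyI⟩⟩⟩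
  have hreach : ∀ u : ↥(↑(insert y D) : Set V), (T.induce _).Reachable u ⟨x, hxI⟩ := by
    intro u
    have hu := u.2
    simp only [Finset.coe_insert, Set.mem_insert_iff, Finset.mem_coe] at hu
    rcases hu with hu | hu
    · have hadj : (T.induce (↑(insert y D) : Set V)).Adj u ⟨x, hxI⟩ := by
        simp only [SimpleGraph.comap_adj, SimpleGraph.induce_eq_coe_induce_top]
        exact ⟨u.2, hxI, by rw [show (u : V) = y from hu]; exact ha.symm⟩
      exact hadj.reachable
    · obtain ⟨w⟩ := hD.2.preconnected ⟨u.1, hu⟩ ⟨x, hx⟩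
      have := (w.map (T.induceHomOfLE hle).toHom).reachable
      convert this using 2 <;> rfl
  intro u v
  exact (hreach u).trans (hreach v).symm

lemma degIn_insert_self (hT : IsRegularTree T d) (hD : IsGraphDomain T D) {x y : V}
    (hx : x ∈ D) (hy : y ∉ D) (ha : T.Adj x y) :
    degIn T (insert y D) y = 1 := by
  rw [degIn_eq]
  have : (insert y D).filter (fun z => T.Adj y z) = {x} := by
    ext z
    simp only [Finset.mem_filter, Finset.mem_insert, Finset.mem_singleton]
    constructor
    · rintro ⟨rfl | hz, hadj⟩
      · exact absurd hadj (T.loopless.irrefl _)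
      · exact unique_attach hT hD.2 hy hz hx hadj.symm ha
    · rintro rfl
      exact ⟨Or.inr hx, ha.symm⟩
  rw [this, Finset.card_singleton]

lemma degIn_insert_other (hT : IsRegularTree T d) (hD : IsGraphDomain T D) {x y z : V}
    (hx : x ∈ D) (hy : y ∉ D) (ha : T.Adj x y) (hz : z ∈ D) (hzx : z ≠ x) :
    degIn T (insert y D) z = degIn T D z := by
  rw [degIn_eq, degIn_eq, Finset.filter_insert]
  have : ¬ T.Adj z y := fun h => hzx (unique_attach hT hD.2 hy hz hx h ha)
  rw [if_neg this]

/-- Inserting an outside neighbor of `x` keeps the residual boundary inside `{x}`,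
provided it was inside `{x}` before. -/
lemma residual_insert (hT : IsRegularTree T d) (hd : 2 ≤ d) (hD : IsGraphDomain T D)
    {x y : V} (hx : x ∈ D) (hy : y ∉ D) (ha : T.Adj x y)
    (hres : residualBoundary T D ⊆ {x}) :
    residualBoundary T (insert y D) ⊆ {x} := by
  intro z hz
  simp only [residualBoundary, Finset.mem_filter, mem_innerBoundary] at hz
  obtain ⟨⟨hzmem, w, hw, hzw⟩, hdeg⟩ := hz
  rw [Finset.mem_singleton]
  by_contra hzx
  rcases Finset.mem_insert.1 hzmem with rfl | hzD
  · rw [degIn_insert_self hT hD hx hy ha] at hdeg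
    omega
  · rw [degIn_insert_other hT hD hx hy ha hzD hzx] at hdeg
    have hzres : z ∈ residualBoundary T D := by
      simp only [residualBoundary, Finset.mem_filter, mem_innerBoundary]
      exact ⟨⟨hzD, w, fun hwD => hw (Finset.mem_insert_of_mem hwD), hzw⟩, hdeg⟩
    exact hzx (Finset.mem_singleton.1 (hres hzres))
end Aux5
section Aux6
open Finset SimpleGraph
open scoped Classical
variable {V : Type*} {T : SimpleGraph V} {d : ℕ}

lemma tau_le_of_residual (hT : IsRegularTree T d) (hd : 2 ≤ d) {E : Finset V}
    (hres : (residualBoundary T E).card ≤ 1) : tauD T E ≤ d - 2 := by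
  set B := innerBoundary T E with hB
  set R := residualBoundary T E with hR
  have hRB : R ⊆ B := Finset.filter_subset _ _
  have hsplit : ∑ x ∈ B \ R, (degIn T E x - 1) + ∑ x ∈ R, (degIn T E x - 1)
      = ∑ x ∈ B, (degIn T E x - 1) := Finset.sum_sdiff hRB
  have h1 : ∑ x ∈ B \ R, (degIn T E x - 1) = 0 := by
    refine Finset.sum_eq_zero (fun x hx => ?_)
    rw [Finset.mem_sdiff] at hx
    have : ¬ 2 ≤ degIn T E x := by
      intro h2
      exact hx.2 (Finset.mem_filter.2 ⟨hx.1, h2⟩)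
    omega
  have h3 : ∀ x ∈ R, degIn T E x - 1 ≤ d - 2 := by
    intro x hx
    have hxB : x ∈ B := hRB hx
    have hxE : x ∈ E := innerBoundary_subset hxB
    have := (mem_innerBoundary_iff_degIn_lt hT hd hxE).1 hxB
    omega
  have h2' : ∑ x ∈ R, (degIn T E x - 1) ≤ R.card * (d - 2) := by
    calc ∑ x ∈ R, (degIn T E x - 1) ≤ ∑ _x ∈ R, (d - 2) := Finset.sum_le_sum h3
    _ = R.card * (d - 2) := by rw [Finset.sum_const, smul_eq_mul]
  have : tauD T E = ∑ x ∈ B, (degIn T E x - 1) := by rw [tauD, hB]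
  have hRd : R.card * (d - 2) ≤ d - 2 := by
    calc R.card * (d - 2) ≤ 1 * (d - 2) := Nat.mul_le_mul_right _ hres
    _ = d - 2 := one_mul _
  omega

lemma exists_good (hT : IsRegularTree T d) (hd : 2 ≤ d) :
    ∀ n : ℕ, 1 ≤ n → ∃ E : Finset V, IsGraphDomain T E ∧ E.card = n ∧
      (residualBoundary T E).card ≤ 1 := by
  intro n hn
  induction n with
  | zero => omega
  | succ m ih =>
    rcases Nat.eq_or_lt_of_le hn with h1 | h1
    · -- m + 1 = 1 : singleton
      obtain ⟨v⟩ := hT.1.nonempty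
      refine ⟨{v}, ⟨Finset.singleton_nonempty v, ?_⟩, by rw [Finset.card_singleton]; omega, ?_⟩
      · rw [SimpleGraph.connected_iff]
        refine ⟨?_, ⟨⟨v, by simp⟩⟩⟩
        intro u w
        have hu : u = w := by
          apply Subtype.ext
          have h1 := u.2
          have h2 := w.2
          simp only [Finset.coe_singleton, Set.mem_singleton_iff] at h1 h2
          rw [h1, h2]
        rw [hu]
      · calc (residualBoundary T {v}).card ≤ ({v} : Finset V).card :=
              Finset.card_le_card ((Finset.filter_subset _ _).trans innerBoundary_subset)
        _ = 1 := Finset.card_singleton v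
    · -- m ≥ 1 : extend
      obtain ⟨E, hE, hEcard, hEres⟩ := ih (by omega)
      -- choose the attachment vertex
      have hbd := boundary_nonempty hT hd hE
      obtain ⟨x, hxB, hxres⟩ : ∃ x, x ∈ innerBoundary T E ∧ residualBoundary T E ⊆ {x} := by
        rcases (residualBoundary T E).eq_empty_or_nonempty with hemp | ⟨x, hx⟩
        · obtain ⟨x, hx⟩ := hbd
          exact ⟨x, hx, by rw [hemp]; exact Finset.empty_subset _⟩
        · refine ⟨x, Finset.mem_of_mem_filter _ hx, ?_⟩
          intro z hz
          rw [Finset.mem_singleton]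
          exact Finset.card_le_one.1 hEres z hz x hx
      obtain ⟨hxE, y, hy, hxy⟩ := mem_innerBoundary.1 hxB
      refine ⟨insert y E, domain_insert hE hxE hy hxy, ?_, ?_⟩
      · rw [Finset.card_insert_of_notMem hy, hEcard]
      · have := residual_insert hT hd hE hxE hy hxy hxres
        calc (residualBoundary T (insert y E)).card ≤ ({x} : Finset V).card :=
              Finset.card_le_card this
        _ = 1 := Finset.card_singleton x
end Aux6
/-- Optimality criterion: a domain `D` with `|D| ≥ 2` is isoperimetrically optimal
iff `τ(D) ≤ d − 2`. -/
theorem stmt_10 {V : Type*} (d : ℕ) (hd : 2 ≤ d) (T : SimpleGraph V)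
    (hT : IsRegularTree T d) (D : Finset V) (hD : IsGraphDomain T D) (hcard : 2 ≤ D.card) :
    IsOptimal T D ↔ tauD T D ≤ d - 2 := by
  have hid := boundary_identity hT hd hD hcard
  constructor
  · intro hopt
    obtain ⟨E, hE, hEcard, hEres⟩ := exists_good hT hd D.card (by omega)
    have htauE : tauD T E ≤ d - 2 := tau_le_of_residual hT hd hEres
    have hidE := boundary_identity hT hd hE (by omega)
    rw [hEcard] at hidE
    have hb := hopt E hE hEcard
    have hd1 : (0 : ℤ) ≤ (d : ℤ) - 1 := by
      have : (2 : ℤ) ≤ (d : ℤ) := by exact_mod_cast hd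
      linarith
    have hbZ : ((innerBoundary T D).card : ℤ) ≤ ((innerBoundary T E).card : ℤ) := by
      exact_mod_cast hb
    have hmul : ((d : ℤ) - 1) * (innerBoundary T D).card
        ≤ ((d : ℤ) - 1) * (innerBoundary T E).card :=
      mul_le_mul_of_nonneg_left hbZ hd1
    have htauZ : (tauD T D : ℤ) ≤ (tauD T E : ℤ) := by linarith [hid, hidE, hmul]
    have htauEZ : (tauD T E : ℤ) ≤ (d : ℤ) - 2 := by
      have : ((d - 2 : ℕ) : ℤ) = (d : ℤ) - 2 := by omega
      omega
    have : (tauD T D : ℤ) ≤ (d : ℤ) - 2 := le_trans htauZ htauEZ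
    omega
  · intro htau D' hD' hcard'
    by_contra hlt
    push_neg at hlt
    have hid' := boundary_identity hT hd hD' (by omega)
    rw [hcard'] at hid'
    have hd1 : (1 : ℤ) ≤ (d : ℤ) - 1 := by
      have : (2 : ℤ) ≤ (d : ℤ) := by exact_mod_cast hd
      linarith
    have hbb : (1 : ℤ) ≤ ((innerBoundary T D).card : ℤ) - ((innerBoundary T D').card : ℤ) := by
      have : (innerBoundary T D').card + 1 ≤ (innerBoundary T D).card := hlt
      omega
    have hmul : ((d : ℤ) - 1) * 1
        ≤ ((d : ℤ) - 1) * (((innerBoundary T D).card : ℤ) - (innerBoundary T D').card) :=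
      mul_le_mul_of_nonneg_left hbb (by linarith)
    have htauZ : (tauD T D : ℤ) ≤ (d : ℤ) - 2 := by omega
    have htau'Z : (0 : ℤ) ≤ (tauD T D' : ℤ) := by positivity
    have hexp : ((d : ℤ) - 1) * (((innerBoundary T D).card : ℤ) - (innerBoundary T D').card)
        = (tauD T D : ℤ) - (tauD T D' : ℤ) := by
      have h1 := hid
      have h2 := hid'
      ring_nf
      ring_nf at h1 h2
      linarith
    linarith
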